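/- Assume 0 < α ≤ 1, set ρ = √α, and assume the appropriate regularization conditions: there are constants c_u > 0 and c_o ≥ 0 with d_k² + α r_k² ≥ c_u and d_k r_k ≤ c_o for all k = 1, …, n. Then the AM-GM bounds hold with the α-independent constants δ = ½(1 + c_o²)⁻¹ and β = (1 + c_u)^{-1/2}; that is, λ_min(½(Q_R + Q_J)) ≥ ½(1 + c_o²)⁻¹ and λ_max(Q_R Q_J) ≤ (1 + c_u)⁻¹. -/

import Mathlib

open Matrix

/-- The vector in Euclidean space obtained by applying the matrix `M` to `x`
(matrix-vector multiplication, viewed as a map between Euclidean spaces). -/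
noncomputable def mulVecE {ι κ : Type} [Fintype ι] [Fintype κ] [DecidableEq κ]
    (M : Matrix ι κ ℝ) (x : EuclideanSpace ℝ κ) : EuclideanSpace ℝ ι :=
  Matrix.toEuclideanLin M x

/-- The spectral norm (Euclidean operator norm) of a matrix. -/
noncomputable def specNorm {ι κ : Type} [Fintype ι] [Fintype κ] [DecidableEq κ]
    (M : Matrix ι κ ℝ) : ℝ :=
  ‖LinearMap.toContinuousLinearMap (Matrix.toEuclideanLin M)‖

lemma eig_diag_conj {n : ℕ} (Φ : Matrix (Fin n) (Fin n) ℝ)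
    (h1 : Φᵀ * Φ = 1) (h2 : Φ * Φᵀ = 1) (f : Fin n → ℝ) (μ : ℝ)
    (h : Module.End.HasEigenvalue
      (Matrix.toEuclideanLin (Φ * diagonal f * Φᵀ)) μ) : ∃ k, f k = μ := by
  obtain ⟨x, hxev⟩ := h.exists_hasEigenvector
  have hx : Matrix.toEuclideanLin (Φ * diagonal f * Φᵀ) x = μ • x := hxev.apply_eq_smul
  have hx0 : x ≠ 0 := hxev.right
  set xf : Fin n → ℝ := (WithLp.equiv 2 (Fin n → ℝ)) x with hxf
  have hx' : (Φ * (diagonal f * Φᵀ)) *ᵥ xf = μ • xf := by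
    have := congrArg (WithLp.equiv 2 (Fin n → ℝ)) hx
    simpa [hxf, Matrix.mul_assoc] using this
  set y : Fin n → ℝ := Φᵀ *ᵥ xf with hy
  have hy0 : y ≠ 0 := by
    intro h0
    apply hx0
    have : Φ *ᵥ y = 0 := by rw [h0, Matrix.mulVec_zero]
    rw [hy, Matrix.mulVec_mulVec, h2, Matrix.one_mulVec] at this
    have : x = 0 := by
      apply (WithLp.equiv 2 (Fin n → ℝ)).injective
      simpa [hxf] using this
    exact this
  have key : diagonal f *ᵥ y = μ • y := by
    have h3 : diagonal f * Φᵀ = Φᵀ * (Φ * (diagonal f * Φᵀ)) := by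
      rw [← Matrix.mul_assoc, ← Matrix.mul_assoc, h1, Matrix.one_mul]
    calc diagonal f *ᵥ y = (diagonal f * Φᵀ) *ᵥ xf := by rw [hy, Matrix.mulVec_mulVec]
    _ = Φᵀ *ᵥ ((Φ * (diagonal f * Φᵀ)) *ᵥ xf) := by rw [Matrix.mulVec_mulVec, ← h3]
    _ = μ • y := by rw [hx', Matrix.mulVec_smul]
  obtain ⟨k, hk⟩ := Function.ne_iff.mp hy0
  refine ⟨k, ?_⟩
  have := congrFun key k
  simp [Matrix.mulVec_diagonal] at this
  exact mul_right_cancel₀ hk (by simpa [mul_comm] using this)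

/-- For source inversion with spectral filtering regularization, `0 < α ≤ 1`,
and `ρ = √α`, appropriate regularization implies the AM-GM bounds with the
`α`-independent constants `δ = ½(1 + co²)⁻¹` and `β² = (1 + cu)⁻¹`. -/
theorem stmt14 (n : ℕ) (hn : 1 ≤ n) (α ρ : ℝ) (hα : 0 < α) (hα1 : α ≤ 1)
    (hρ : ρ = Real.sqrt α)
    (Φ : Matrix (Fin n) (Fin n) ℝ) (hΦ : Φᵀ * Φ = 1 ∧ Φ * Φᵀ = 1)
    (d r : Fin n → ℝ) (hd : ∀ k, 0 ≤ d k) (hr : ∀ k, 0 ≤ r k)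
    (cu co : ℝ) (hcu : 0 < cu) (hco : 0 ≤ co)
    (hunder : ∀ k, cu ≤ d k ^ 2 + α * r k ^ 2)
    (hover : ∀ k, d k * r k ≤ co)
    (QR QJ : Matrix (Fin n) (Fin n) ℝ)
    (hQR : QR = Φ * diagonal (fun k => ((α / ρ) * r k ^ 2 + 1)⁻¹) * Φᵀ)
    (hQJ : QJ = Φ * diagonal (fun k => ((1 / ρ) * d k ^ 2 + 1)⁻¹) * Φᵀ)
    :
    (∀ μ : ℝ, Module.End.HasEigenvalue
        (Matrix.toEuclideanLin ((2 : ℝ)⁻¹ • (QR + QJ))) μ →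
      (1 / 2) * (1 + co ^ 2)⁻¹ ≤ μ) ∧
    (∀ μ : ℝ, Module.End.HasEigenvalue (Matrix.toEuclideanLin (QR * QJ)) μ →
      μ ≤ (1 + cu)⁻¹) := by
  obtain ⟨h1, h2⟩ := hΦ
  have hρ0 : 0 < ρ := by rw [hρ]; exact Real.sqrt_pos.mpr hα
  have hρ1 : ρ ≤ 1 := by rw [hρ]; exact Real.sqrt_le_one.mpr hα1
  have hρ2 : ρ * ρ = α := by rw [hρ]; exact Real.mul_self_sqrt hα.le
  set a : Fin n → ℝ := fun k => (α / ρ) * r k ^ 2 + 1 with ha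
  set b : Fin n → ℝ := fun k => (1 / ρ) * d k ^ 2 + 1 with hb
  have hs : ∀ k, 0 ≤ (α / ρ) * r k ^ 2 := fun k =>
    mul_nonneg (div_nonneg hα.le hρ0.le) (sq_nonneg _)
  have ht : ∀ k, 0 ≤ (1 / ρ) * d k ^ 2 := fun k =>
    mul_nonneg (by positivity) (sq_nonneg _)
  have hak : ∀ k, 0 < a k := fun k => by have := hs k; simp only [ha]; linarith
  have hbk : ∀ k, 0 < b k := fun k => by have := ht k; simp only [hb]; linarith
  have hst : ∀ k, ((α / ρ) * r k ^ 2) * ((1 / ρ) * d k ^ 2) ≤ co ^ 2 := by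
    intro k
    have : ((α / ρ) * r k ^ 2) * ((1 / ρ) * d k ^ 2) = (d k * r k) ^ 2 := by
      field_simp
      rw [← hρ2]; ring
    rw [this]
    have h0 : 0 ≤ d k * r k := mul_nonneg (hd k) (hr k)
    nlinarith [hover k]
  constructor
  · intro μ hμ
    have hM : (2 : ℝ)⁻¹ • (QR + QJ)
        = Φ * diagonal (fun k => 2⁻¹ * ((a k)⁻¹ + (b k)⁻¹)) * Φᵀ := by
      rw [hQR, hQJ, ← Matrix.add_mul, ← Matrix.mul_add, Matrix.diagonal_add,
        ← Matrix.smul_mul, ← Matrix.mul_smul, ← Matrix.diagonal_smul]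
      congr 1
    rw [hM] at hμ
    obtain ⟨k, hk⟩ := eig_diag_conj Φ h1 h2 _ μ hμ
    rw [← hk]
    have hab : (1 + co ^ 2)⁻¹ ≤ (a k)⁻¹ + (b k)⁻¹ := by
      have hsum : (a k)⁻¹ + (b k)⁻¹ = (a k + b k) / (a k * b k) := by
        rw [inv_eq_one_div, inv_eq_one_div, div_add_div _ _ (hak k).ne' (hbk k).ne']
        ring
      rw [hsum, inv_eq_one_div, div_le_div_iff₀ (by positivity) (by positivity)]
      have h3 := hst k
      have h4 := hs k
      have h5 := ht k
      simp only [ha, hb]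
      nlinarith [sq_nonneg co, mul_nonneg h4 h5]
    linarith
  · intro μ hμ
    have hM : QR * QJ = Φ * diagonal (fun k => (a k)⁻¹ * (b k)⁻¹) * Φᵀ := by
      rw [hQR, hQJ]
      have : Φ * diagonal (fun k => (a k)⁻¹) * Φᵀ * (Φ * diagonal (fun k => (b k)⁻¹) * Φᵀ)
          = Φ * (diagonal (fun k => (a k)⁻¹) * (Φᵀ * Φ) * diagonal (fun k => (b k)⁻¹)) * Φᵀ := by
        simp only [Matrix.mul_assoc]
      rw [this, h1, Matrix.mul_one, Matrix.diagonal_mul_diagonal]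
    rw [hM] at hμ
    obtain ⟨k, hk⟩ := eig_diag_conj Φ h1 h2 _ μ hμ
    rw [← hk, ← mul_inv]
    apply inv_anti₀ (by linarith)
    have hs' : α * r k ^ 2 ≤ (α / ρ) * r k ^ 2 := by
      apply mul_le_mul_of_nonneg_right _ (sq_nonneg _)
      rw [le_div_iff₀ hρ0]
      nlinarith
    have ht' : d k ^ 2 ≤ (1 / ρ) * d k ^ 2 := by
      apply le_mul_of_one_le_left (sq_nonneg _)
      rw [le_div_iff₀ hρ0]; linarith
    have := hunder k
    have := mul_nonneg (hs k) (ht k)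
    simp only [ha, hb]
    nlinarith
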